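/- Let f, g ∈ ℤ̂[[t^ℤ̂]]. If for every n ≥ 1 the image of g in ℤ̂[t]/(tⁿ−1) lies in the ideal generated by the image of f, then g lies in the principal ideal (f) of ℤ̂[[t^ℤ̂]]; equivalently, the natural map from the ideal (f) to the inverse limit lim_n (f mod (tⁿ−1))·(ℤ̂[t]/(tⁿ−1)) is an isomorphism. -/

import Mathlib

open Polynomial

set_option synthInstance.maxHeartbeats 1000000
set_option maxHeartbeats 1000000

noncomputable section
noncomputable section

/-- The ring of profinite integers `ẐZ = lim_n ℤ/nℤ`, realized as the subring of
`∏ n : ℕ+, ZMod n` consisting of families compatible under the natural projections. -/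
def ZHatSubring : Subring (∀ n : ℕ+, ZMod n) where
  carrier := {f | ∀ (m n : ℕ+) (h : (m : ℕ) ∣ (n : ℕ)), ZMod.castHom h (ZMod m) (f n) = f m}
  mul_mem' := fun {a b} ha hb m n h => by
    simp only [Pi.mul_apply, map_mul, ha m n h, hb m n h]
  one_mem' := fun m n h => map_one _
  add_mem' := fun {a b} ha hb m n h => by
    simp only [Pi.add_apply, map_add, ha m n h, hb m n h]
  zero_mem' := fun m n h => map_zero _
  neg_mem' := fun {a} ha m n h => by
    simp only [Pi.neg_apply, map_neg, ha m n h]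

/-- The profinite integers as a type. -/
abbrev ZHat : Type := ZHatSubring

instance : CommRing ZHat := inferInstance

/-- The quotient ring `R[t]/(tⁿ - 1)`. -/
abbrev CycModN (R : Type) [CommRing R] (n : ℕ+) : Type :=
  Polynomial R ⧸ Ideal.span {(X : Polynomial R) ^ (n : ℕ) - 1}

lemma X_pow_sub_one_dvd {R : Type} [CommRing R] {m n : ℕ} (h : m ∣ n) :
    (X : Polynomial R) ^ m - 1 ∣ (X : Polynomial R) ^ n - 1 := by
  obtain ⟨k, rfl⟩ := h
  simpa [pow_mul] using sub_dvd_pow_sub_pow ((X : Polynomial R) ^ m) 1 k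

/-- The natural transition map `R[t]/(tⁿ-1) → R[t]/(tᵐ-1)` for `m ∣ n`. -/
def cycTransition (R : Type) [CommRing R] {m n : ℕ+} (h : (m : ℕ) ∣ (n : ℕ)) :
    CycModN R n →+* CycModN R m :=
  Ideal.Quotient.factor
    (Ideal.span_singleton_le_span_singleton.mpr (X_pow_sub_one_dvd h))

/-- The completed group ring `R[[t^Ẑ]] = lim_n R[t]/(tⁿ-1)`, realized as the subring of
`∏ n : ℕ+, R[t]/(tⁿ-1)` of families compatible under the transition maps. -/
def CompletedCycRing (R : Type) [CommRing R] : Subring (∀ n : ℕ+, CycModN R n) where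
  carrier := {f | ∀ (m n : ℕ+) (h : (m : ℕ) ∣ (n : ℕ)), cycTransition R h (f n) = f m}
  mul_mem' := fun {a b} ha hb m n h => by
    simp only [Pi.mul_apply, map_mul, ha m n h, hb m n h]
  one_mem' := fun m n h => map_one _
  add_mem' := fun {a b} ha hb m n h => by
    simp only [Pi.add_apply, map_add, ha m n h, hb m n h]
  zero_mem' := fun m n h => map_zero _
  neg_mem' := fun {a} ha m n h => by
    simp only [Pi.neg_apply, map_neg, ha m n h]

instance completedCycRingCommRing (R : Type) [CommRing R] :
    CommRing (CompletedCycRing R) := inferInstance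

/-- The natural ring homomorphism `R[t] → R[[t^Ẑ]]`, `f ↦ (f mod (tⁿ-1))ₙ`. -/
def polyToCompleted (R : Type) [CommRing R] : Polynomial R →+* CompletedCycRing R :=
  RingHom.codRestrict (Pi.ringHom fun n => Ideal.Quotient.mk _) _
    (fun f m n h => by
      (simp [cycTransition, Pi.ringHom_apply]) <;> rfl)

/-- The natural ring homomorphism `ℤ[t] → R[[t^Ẑ]]`. -/
def intPolyEmb (R : Type) [CommRing R] : Polynomial ℤ →+* CompletedCycRing R :=
  (polyToCompleted R).comp (Polynomial.mapRingHom (Int.castRingHom R))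




namespace S14

abbrev cycPoly (R : Type) [CommRing R] (n : ℕ+) : Polynomial R := X ^ (n:ℕ) - 1

lemma cycMonic (R : Type) [CommRing R] (n : ℕ+) : (cycPoly R n).Monic := by
  simpa using monic_X_pow_sub_C (1 : R) n.pos.ne'

lemma cycDegree (R : Type) [CommRing R] [Nontrivial R] (n : ℕ+) :
    (cycPoly R n).degree = (n:ℕ) := by
  simpa using degree_X_pow_sub_C n.pos (1 : R)

lemma cycSubsingleton (R : Type) [CommRing R] [Subsingleton R] (n : ℕ+) :
    Subsingleton (CycModN R n) :=
  ⟨fun a b => by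
    obtain ⟨p, rfl⟩ := Ideal.Quotient.mk_surjective a
    obtain ⟨q, rfl⟩ := Ideal.Quotient.mk_surjective b
    rw [Subsingleton.elim p q]⟩

/-- `R[X]/(X^{n'}-1) → S[X]/(X^n-1)` induced by `φ : R →+* S` and `n ∣ n'`. -/
def resMap {R S : Type} [CommRing R] [CommRing S] (φ : R →+* S) {n n' : ℕ+}
    (h : (n:ℕ) ∣ (n':ℕ)) : CycModN R n' →+* CycModN S n :=
  Ideal.Quotient.lift _ ((Ideal.Quotient.mk _).comp (mapRingHom φ))
    (by
      intro a ha
      rw [Ideal.mem_span_singleton] at ha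
      obtain ⟨b, rfl⟩ := ha
      have hmap : (mapRingHom φ) (((X : Polynomial R) ^ (n':ℕ) - 1) * b)
          = ((X : Polynomial S) ^ (n':ℕ) - 1) * (mapRingHom φ) b := by
        simp
      rw [RingHom.comp_apply, hmap, Ideal.Quotient.eq_zero_iff_mem, Ideal.mem_span_singleton]
      exact (X_pow_sub_one_dvd h).mul_right _)

lemma resMap_mk {R S : Type} [CommRing R] [CommRing S] (φ : R →+* S) {n n' : ℕ+}
    (h : (n:ℕ) ∣ (n':ℕ)) (p : Polynomial R) :
    resMap φ h (Ideal.Quotient.mk _ p) = Ideal.Quotient.mk _ (p.map φ) := rfl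

lemma resMap_resMap {R S T : Type} [CommRing R] [CommRing S] [CommRing T]
    (φ : S →+* T) (ψ : R →+* S) {n₁ n₂ n₃ : ℕ+} (h : (n₁:ℕ) ∣ n₂) (h' : (n₂:ℕ) ∣ n₃)
    (x : CycModN R n₃) :
    resMap φ h (resMap ψ h' x) = resMap (φ.comp ψ) (h.trans h') x := by
  obtain ⟨p, rfl⟩ := Ideal.Quotient.mk_surjective x
  simp [resMap_mk, Polynomial.map_map]

lemma cycTransition_mk {R : Type} [CommRing R] {n n' : ℕ+} (h : (n:ℕ) ∣ n')
    (p : Polynomial R) :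
    cycTransition R h (Ideal.Quotient.mk _ p) = Ideal.Quotient.mk _ p :=
  Ideal.Quotient.factor_mk _ _

lemma cycTransition_eq_resMap {R : Type} [CommRing R] {n n' : ℕ+} (h : (n:ℕ) ∣ n')
    (x : CycModN R n') :
    cycTransition R h x = resMap (RingHom.id R) h x := by
  obtain ⟨p, rfl⟩ := Ideal.Quotient.mk_surjective x
  rw [cycTransition_mk, resMap_mk, Polynomial.map_id]

/-- A canonical representative of degree `< n`. -/
def cycRep {R : Type} [CommRing R] (n : ℕ+) (x : CycModN R n) : Polynomial R :=
  (Ideal.Quotient.mk_surjective (I := Ideal.span {cycPoly R n}) x).choose %ₘ cycPoly R n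

lemma mk_cycRep {R : Type} [CommRing R] (n : ℕ+) (x : CycModN R n) :
    Ideal.Quotient.mk _ (cycRep n x) = x := by
  have hs := (Ideal.Quotient.mk_surjective (I := Ideal.span {cycPoly R n}) x).choose_spec
  rw [cycRep, modByMonic_eq_sub_mul_div _ (cycPoly R n), map_sub]
  have h2 : (Ideal.Quotient.mk (Ideal.span {cycPoly R n}))
      (cycPoly R n * ((Ideal.Quotient.mk_surjective
        (I := Ideal.span {cycPoly R n}) x).choose /ₘ cycPoly R n)) = 0 := by
    rw [Ideal.Quotient.eq_zero_iff_mem]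
    exact Ideal.mul_mem_right _ _ (Ideal.subset_span (Set.mem_singleton _))
  rw [h2, sub_zero, hs]

lemma cycRep_degree_lt {R : Type} [CommRing R] [Nontrivial R] (n : ℕ+) (x : CycModN R n) :
    (cycRep n x).degree < (n:ℕ) := by
  have := degree_modByMonic_lt (Ideal.Quotient.mk_surjective
    (I := Ideal.span {cycPoly R n}) x).choose (cycMonic R n)
  rwa [cycDegree] at this

lemma rep_unique {R : Type} [CommRing R] {n : ℕ+} {p q : Polynomial R}
    (hp : p.degree < (n:ℕ)) (hq : q.degree < (n:ℕ))
    (hmk : Ideal.Quotient.mk (Ideal.span {cycPoly R n}) p = Ideal.Quotient.mk _ q) :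
    p = q := by
  rcases subsingleton_or_nontrivial R with hR | hR
  · exact Subsingleton.elim _ _
  · have hdvd : cycPoly R n ∣ p - q := by
      rw [← Ideal.mem_span_singleton]
      exact Ideal.Quotient.eq.mp hmk
    have hdeg : (p - q).degree < (cycPoly R n).degree := by
      rw [cycDegree]
      exact lt_of_le_of_lt (degree_sub_le p q) (max_lt hp hq)
    have h0 : p - q = 0 := by
      have e1 : (p - q) %ₘ cycPoly R n = p - q :=
        (modByMonic_eq_self_iff (cycMonic R n)).mpr hdeg
      have e2 : (p - q) %ₘ cycPoly R n = 0 :=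
        (modByMonic_eq_zero_iff_dvd (cycMonic R n)).mpr hdvd
      rw [← e1, e2]
    exact sub_eq_zero.mp h0

lemma cycRep_eq {R : Type} [CommRing R] {n : ℕ+} {p : Polynomial R}
    (hp : p.degree < (n:ℕ)) :
    cycRep n (Ideal.Quotient.mk (Ideal.span {cycPoly R n}) p) = p := by
  rcases subsingleton_or_nontrivial R with hR | hR
  · exact Subsingleton.elim _ _
  · exact rep_unique (cycRep_degree_lt _ _) hp (mk_cycRep _ _)

lemma map_cycRep {R S : Type} [CommRing R] [CommRing S] (φ : R →+* S) (n : ℕ+)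
    (x : CycModN R n) :
    cycRep n (resMap φ (dvd_refl (n:ℕ)) x) = (cycRep n x).map φ := by
  rcases subsingleton_or_nontrivial R with hR | hR
  · have h10 : (1 : S) = 0 := by
      rw [← map_one φ, ← map_zero φ]
      exact congrArg φ (Subsingleton.elim _ _)
    have : Subsingleton S := subsingleton_of_zero_eq_one h10.symm
    exact Subsingleton.elim _ _
  · have hx : resMap φ (dvd_refl (n:ℕ)) x
        = Ideal.Quotient.mk _ ((cycRep n x).map φ) := by
      conv_lhs => rw [← mk_cycRep n x, resMap_mk]
    rw [hx]
    exact cycRep_eq (lt_of_le_of_lt (degree_map_le) (cycRep_degree_lt n x))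

lemma sum_coeff_eq {R : Type} [CommRing R] {n : ℕ+} {p : Polynomial R}
    (hp : p.degree < (n:ℕ)) :
    ∑ i ∈ Finset.range (n:ℕ), C (p.coeff i) * X ^ i = p := by
  have hnat : p.natDegree < (n:ℕ) := by
    rcases eq_or_ne p 0 with rfl | hne
    · simp only [natDegree_zero]; exact n.pos
    · exact (natDegree_lt_iff_degree_lt hne).mpr hp
  conv_rhs => rw [p.as_sum_range' _ hnat]
  exact Finset.sum_congr rfl fun i _ => C_mul_X_pow_eq_monomial

/-! ### The projections `ZHat → ZMod m` -/

def φm (m : ℕ+) : ZHat →+* ZMod m :=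
  (Pi.evalRingHom (fun n : ℕ+ => ZMod n) m).comp (ZHatSubring.subtype)

lemma φm_apply (m : ℕ+) (z : ZHat) : φm m z = z.1 m := rfl

lemma φm_compat {m m' : ℕ+} (hm : (m:ℕ) ∣ m') :
    (ZMod.castHom hm (ZMod m)).comp (φm m') = φm m :=
  RingHom.ext fun z => z.2 m m' hm

lemma zhat_ext {z w : ZHat} (h : ∀ m : ℕ+, φm m z = φm m w) : z = w :=
  Subtype.ext (funext h)

lemma cyc_inj {n : ℕ+} {x y : CycModN ZHat n}
    (h : ∀ m : ℕ+, resMap (φm m) (dvd_refl (n:ℕ)) x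
      = resMap (φm m) (dvd_refl (n:ℕ)) y) : x = y := by
  have hc : cycRep n x = cycRep n y := by
    refine Polynomial.ext fun i => zhat_ext fun m => ?_
    have h1 := congrArg (cycRep n) (h m)
    rw [map_cycRep, map_cycRep] at h1
    have h2 := congrArg (fun p => Polynomial.coeff p i) h1
    simpa [coeff_map] using h2
  rw [← mk_cycRep n x, ← mk_cycRep n y, hc]

/-! ### Finiteness -/

instance cycFinite (n m : ℕ+) : Finite (CycModN (ZMod m) n) := by
  haveI : NeZero ((m : ℕ)) := ⟨m.pos.ne'⟩
  refine Finite.of_injective (fun x (i : Fin (n:ℕ)) => (cycRep n x).coeff i) ?_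
  intro x y hxy
  rcases subsingleton_or_nontrivial (ZMod m) with hR | hR
  · haveI := cycSubsingleton (ZMod (m:ℕ)) n
    exact Subsingleton.elim _ _
  · have hrep : cycRep n x = cycRep n y := by
      ext i
      rcases lt_or_ge i (n:ℕ) with hi | hi
      · exact congrFun hxy ⟨i, hi⟩
      · rw [coeff_eq_zero_of_degree_lt, coeff_eq_zero_of_degree_lt]
        · exact lt_of_lt_of_le (cycRep_degree_lt n y) (Nat.cast_le.mpr hi)
        · exact lt_of_lt_of_le (cycRep_degree_lt n x) (Nat.cast_le.mpr hi)
    rw [← mk_cycRep n x, ← mk_cycRep n y, hrep]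

/-! ### The cofinal chain -/

def c (k : ℕ) : ℕ+ := ⟨(k+1).factorial, Nat.factorial_pos _⟩

lemma c_mono {k k' : ℕ} (h : k ≤ k') : ((c k : ℕ)) ∣ (c k' : ℕ) :=
  Nat.factorial_dvd_factorial (by omega)

lemma dvd_c (n : ℕ+) : (n:ℕ) ∣ (c (n:ℕ) : ℕ) :=
  Nat.dvd_factorial n.pos (Nat.le_succ _)

def K (n m : ℕ+) : ℕ := (n:ℕ) ⊔ (m:ℕ)

lemma n_dvd_cK (n m : ℕ+) : (n:ℕ) ∣ (c (K n m) : ℕ) :=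
  (dvd_c n).trans (c_mono le_sup_left)

lemma m_dvd_cK (n m : ℕ+) : (m:ℕ) ∣ (c (K n m) : ℕ) :=
  (dvd_c m).trans (c_mono le_sup_right)

abbrev τ {k k' : ℕ} (h : k ≤ k') :
    CycModN (ZMod (c k')) (c k') →+* CycModN (ZMod (c k)) (c k) :=
  resMap (ZMod.castHom (c_mono h) (ZMod (c k))) (c_mono h)

def toB (x : CompletedCycRing ZHat) (k : ℕ) : CycModN (ZMod (c k)) (c k) :=
  resMap (φm (c k)) (dvd_refl _) (x.1 (c k))

lemma resMap_toX (x : CompletedCycRing ZHat) {n n' : ℕ+} (hn : (n:ℕ) ∣ n')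
    {m m' : ℕ+} (hm : (m:ℕ) ∣ m') (hn' : (n':ℕ) ∣ n') :
    resMap (ZMod.castHom hm (ZMod m)) hn (resMap (φm m') hn' (x.1 n'))
      = resMap (φm m) (dvd_refl (n:ℕ)) (x.1 n) := by
  have hxn : x.1 n = cycTransition ZHat hn (x.1 n') := (x.2 n n' hn).symm
  obtain ⟨p, hp⟩ := Ideal.Quotient.mk_surjective (x.1 n')
  rw [← hp, hxn, ← hp, cycTransition_mk, resMap_mk, resMap_mk, resMap_mk,
    Polynomial.map_map, φm_compat hm]

lemma τ_toB (x : CompletedCycRing ZHat) {k k' : ℕ} (h : k ≤ k') :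
    τ h (toB x k') = toB x k :=
  resMap_toX x (c_mono h) (c_mono h) (dvd_refl _)

/-! ### The inverse system of solution sets -/

def SolSet (f g : CompletedCycRing ZHat) (k : ℕ) : Type :=
  {q : CycModN (ZMod (c k)) (c k) // q * toB f k = toB g k}

instance (f g : CompletedCycRing ZHat) (k : ℕ) : Finite (SolSet f g k) :=
  inferInstanceAs (Finite {q : CycModN (ZMod (c k)) (c k) // q * toB f k = toB g k})

lemma τ_refl (k : ℕ) (x : CycModN (ZMod (c k)) (c k)) : τ (le_refl k) x = x := by
  obtain ⟨p, rfl⟩ := Ideal.Quotient.mk_surjective x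
  rw [resMap_mk]
  have h1 : ZMod.castHom (c_mono (le_refl k)) (ZMod (c k)) = RingHom.id _ :=
    ZMod.castHom_self
  rw [h1, Polynomial.map_id]

lemma τ_comp {k₁ k₂ k₃ : ℕ} (h : k₁ ≤ k₂) (h' : k₂ ≤ k₃)
    (x : CycModN (ZMod (c k₃)) (c k₃)) : τ h (τ h' x) = τ (h.trans h') x := by
  rw [resMap_resMap]
  have h2 : (ZMod.castHom (c_mono h) (ZMod (c k₁))).comp
      (ZMod.castHom (c_mono h') (ZMod (c k₂)))
      = ZMod.castHom (c_mono (h.trans h')) (ZMod (c k₁)) :=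
    ZMod.castHom_comp _ _
  rw [h2]

open CategoryTheory in
def solFunctor (f g : CompletedCycRing ZHat) : ℕᵒᵖ ⥤ Type where
  obj k := SolSet f g k.unop
  map {k k'} φ := TypeCat.ofHom fun q => ⟨τ (leOfHom φ.unop) q.1, by
    rw [← τ_toB f (leOfHom φ.unop), ← map_mul, q.2, τ_toB g (leOfHom φ.unop)]⟩
  map_id k := by
    ext q
    exact Subtype.ext (τ_refl k.unop q.1)
  map_comp {k k' k''} φ ψ := by
    ext q
    exact Subtype.ext (τ_comp (leOfHom ψ.unop) (leOfHom φ.unop) q.1).symm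

/-! ### From a section to an element of the completed ring -/

section Reconstruct

variable (Q : ∀ k : ℕ, CycModN (ZMod (c k)) (c k))
variable (hQc : ∀ ⦃k k' : ℕ⦄ (h : k ≤ k'), τ h (Q k') = Q k)

def qA (n m : ℕ+) : CycModN (ZMod m) n :=
  resMap (ZMod.castHom (m_dvd_cK n m) (ZMod m)) (n_dvd_cK n m) (Q (K n m))

include hQc in
lemma qA_eq (n m : ℕ+) (k : ℕ) (hn : (n:ℕ) ∣ (c k : ℕ)) (hm : (m:ℕ) ∣ (c k : ℕ)) :
    resMap (ZMod.castHom hm (ZMod m)) hn (Q k) = qA Q n m := by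
  have e1 : Q k = τ (le_max_left k (K n m)) (Q (max k (K n m))) := (hQc _).symm
  have e2 : Q (K n m) = τ (le_max_right k (K n m)) (Q (max k (K n m))) := (hQc _).symm
  rw [qA, e1, e2, resMap_resMap, resMap_resMap]
  have hc1 : (ZMod.castHom hm (ZMod m)).comp
      (ZMod.castHom (c_mono (le_max_left k (K n m))) (ZMod (c k)))
      = ZMod.castHom (hm.trans (c_mono (le_max_left k (K n m)))) (ZMod m) :=
    ZMod.castHom_comp _ _
  have hc2 : (ZMod.castHom (m_dvd_cK n m) (ZMod m)).comp
      (ZMod.castHom (c_mono (le_max_right k (K n m))) (ZMod (c (K n m))))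
      = ZMod.castHom ((m_dvd_cK n m).trans (c_mono (le_max_right k (K n m)))) (ZMod m) :=
    ZMod.castHom_comp _ _
  rw [hc1, hc2]

include hQc in
lemma qA_transition_n {n n' : ℕ+} (m : ℕ+) (hn : (n:ℕ) ∣ (n':ℕ)) :
    resMap (RingHom.id (ZMod m)) hn (qA Q n' m) = qA Q n m := by
  rw [← qA_eq Q hQc n' m (K n' m) (n_dvd_cK n' m) (m_dvd_cK n' m), resMap_resMap]
  have h1 : (RingHom.id (ZMod m)).comp (ZMod.castHom (m_dvd_cK n' m) (ZMod m))
      = ZMod.castHom (m_dvd_cK n' m) (ZMod m) := RingHom.id_comp _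
  rw [h1]
  exact qA_eq Q hQc n m (K n' m) (hn.trans (n_dvd_cK n' m)) (m_dvd_cK n' m)

include hQc in
lemma qA_transition_m (n : ℕ+) {m m' : ℕ+} (hm : (m:ℕ) ∣ (m':ℕ)) :
    resMap (ZMod.castHom hm (ZMod m)) (dvd_refl (n:ℕ)) (qA Q n m') = qA Q n m := by
  rw [← qA_eq Q hQc n m' (K n m') (n_dvd_cK n m') (m_dvd_cK n m'), resMap_resMap]
  have h1 : (ZMod.castHom hm (ZMod m)).comp (ZMod.castHom (m_dvd_cK n m') (ZMod m'))
      = ZMod.castHom (hm.trans (m_dvd_cK n m')) (ZMod m) := ZMod.castHom_comp _ _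
  rw [h1]
  exact qA_eq Q hQc n m (K n m') (n_dvd_cK n m') (hm.trans (m_dvd_cK n m'))

def cZ (n : ℕ+) (i : ℕ) : ZHat :=
  ⟨fun m => (cycRep n (qA Q n m)).coeff i, by
    intro m m' hm
    have h1 : (cycRep n (qA Q n m')).map (ZMod.castHom hm (ZMod m))
        = cycRep n (qA Q n m) := by
      rw [← map_cycRep, qA_transition_m Q hQc n hm]
    calc ZMod.castHom hm (ZMod m) ((cycRep n (qA Q n m')).coeff i)
        = ((cycRep n (qA Q n m')).map (ZMod.castHom hm (ZMod m))).coeff i :=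
          (coeff_map _ _).symm
      _ = (cycRep n (qA Q n m)).coeff i := by rw [h1]⟩

def qN (n : ℕ+) : CycModN ZHat n :=
  Ideal.Quotient.mk _ (∑ i ∈ Finset.range (n:ℕ), C (cZ Q hQc n i) * X ^ i)

lemma rho_qN (n m : ℕ+) :
    resMap (φm m) (dvd_refl (n:ℕ)) (qN Q hQc n) = qA Q n m := by
  rw [qN, resMap_mk, Polynomial.map_sum]
  have hcongr : ∀ i ∈ Finset.range (n:ℕ),
      (C (cZ Q hQc n i) * X ^ i).map (φm m)
        = C ((cycRep n (qA Q n m)).coeff i) * X ^ i := by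
    intro i _
    rw [Polynomial.map_mul, Polynomial.map_pow, map_C, map_X]
    rfl
  rw [Finset.sum_congr rfl hcongr]
  rcases subsingleton_or_nontrivial (ZMod m) with hR | hR
  · haveI := cycSubsingleton (ZMod (m:ℕ)) n
    exact Subsingleton.elim _ _
  · rw [sum_coeff_eq (cycRep_degree_lt n (qA Q n m)), mk_cycRep]

lemma qN_mem : (fun n => qN Q hQc n) ∈ CompletedCycRing ZHat := by
  intro n n' hnn
  apply cyc_inj
  intro m
  have l1 : resMap (φm m) (dvd_refl (n:ℕ)) (cycTransition ZHat hnn (qN Q hQc n'))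
      = resMap (RingHom.id (ZMod m)) hnn (resMap (φm m) (dvd_refl _) (qN Q hQc n')) := by
    rw [cycTransition_eq_resMap, resMap_resMap, resMap_resMap]
    have : (resMap ((φm m).comp (RingHom.id ZHat))
        ((dvd_refl (n:ℕ)).trans hnn) (qN Q hQc n'))
        = resMap ((RingHom.id (ZMod m)).comp (φm m))
          ((dvd_refl ((n:ℕ))).trans hnn) (qN Q hQc n') := by
      rw [RingHom.comp_id, RingHom.id_comp]
    exact this
  rw [l1, rho_qN Q hQc n' m, qA_transition_n Q hQc m hnn, rho_qN Q hQc n m]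

end Reconstruct

end S14


open S14 CategoryTheory

/-- If `f, g ∈ Ẑ[[t^Ẑ]]` and for every `n ≥ 1` the image of `g` in
`Ẑ[t]/(tⁿ-1)` lies in the ideal generated by the image of `f`, then `g ∈ (f)`. -/
theorem mem_span_of_forall_component_mem_span
    (f g : CompletedCycRing ZHat)
    (h : ∀ n : ℕ+, (g : ∀ n : ℕ+, CycModN ZHat n) n ∈
      Ideal.span {(f : ∀ n : ℕ+, CycModN ZHat n) n}) :
    g ∈ Ideal.span ({f} : Set (CompletedCycRing ZHat)) := by
  haveI hne : ∀ j : ℕᵒᵖ, Nonempty ((solFunctor f g).obj j) := by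
    intro j
    obtain ⟨r, hr⟩ := Ideal.mem_span_singleton.mp (h (c j.unop))
    refine ⟨(⟨resMap (φm (c j.unop)) (dvd_refl _) r, ?_⟩ : SolSet f g j.unop)⟩
    show resMap (φm (c j.unop)) (dvd_refl _) r * toB f j.unop = toB g j.unop
    rw [toB, toB, hr, map_mul, mul_comm]
  haveI hfin : ∀ j : ℕᵒᵖ, Finite ((solFunctor f g).obj j) :=
    fun j => inferInstanceAs (Finite (SolSet f g j.unop))
  obtain ⟨Qs, hQs⟩ := nonempty_sections_of_finite_inverse_system (solFunctor f g)
  have hQc : ∀ ⦃k k' : ℕ⦄ (hh : k ≤ k'),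
      τ hh (Subtype.val (Qs (Opposite.op k'))) = Subtype.val (Qs (Opposite.op k)) := by
    intro k k' hh
    exact congrArg (Subtype.val (p := fun q : CycModN (ZMod (c k)) (c k) => q * toB f k = toB g k)) (hQs ((homOfLE hh).op))
  set Q : ∀ k : ℕ, CycModN (ZMod (c k)) (c k) := fun k => Subtype.val (Qs (Opposite.op k)) with hQdef
  have hQf : ∀ k, Q k * toB f k = toB g k := fun k => Subtype.property (Qs (Opposite.op k))
  rw [Ideal.mem_span_singleton]
  refine ⟨⟨fun n => qN Q hQc n, qN_mem Q hQc⟩, ?_⟩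
  apply Subtype.ext
  funext n
  show g.1 n = f.1 n * qN Q hQc n
  apply cyc_inj
  intro m
  rw [map_mul, rho_qN Q hQc n m]
  -- `resMap (φm m) _ (g.1 n) = resMap (φm m) _ (f.1 n) * qA Q n m`
  have hmul : qA Q n m * resMap (φm m) (dvd_refl (n:ℕ)) (f.1 n)
      = resMap (φm m) (dvd_refl (n:ℕ)) (g.1 n) := by
    have h0 := congrArg
      (resMap (ZMod.castHom (m_dvd_cK n m) (ZMod m)) (n_dvd_cK n m)) (hQf (K n m))
    rw [map_mul, toB, toB, resMap_toX f (n_dvd_cK n m) (m_dvd_cK n m) (dvd_refl _),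
      resMap_toX g (n_dvd_cK n m) (m_dvd_cK n m) (dvd_refl _)] at h0
    exact h0
  rw [← hmul, mul_comm]
end
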